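/- Let $\mathcal{A}$ be an arrangement of $N$ distinct planes in $\mathbb{P}^3$ with polar map degree $d_{\mathcal{A}} \neq 0$, and let $\mathcal{A}'$ be obtained by adding one more distinct plane. Then $d_{\mathcal{A}'} > d_{\mathcal{A}}$. -/

import Mathlib

open Module

/-- Number of hyperplanes of the arrangement `H` containing the subspace `W`. -/
noncomputable def arrMult {n : ℕ} (H : Fin n → Submodule ℂ (Fin 4 → ℂ))
    (W : Submodule ℂ (Fin 4 → ℂ)) : ℕ :=
  Set.ncard {i : Fin n | W ≤ H i}

/-- The set `𝒫`: points (1-dimensional subspaces) lying on at least three of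
the planes, such that the planes through the point do not all share a common
line. -/
def arrPoints {n : ℕ} (H : Fin n → Submodule ℂ (Fin 4 → ℂ)) :
    Set (Submodule ℂ (Fin 4 → ℂ)) :=
  {p | finrank ℂ p = 1 ∧ 3 ≤ arrMult H p ∧
    ¬ ∃ l : Submodule ℂ (Fin 4 → ℂ), finrank ℂ l = 2 ∧
        ∀ i, p ≤ H i → l ≤ H i}

/-- The set `ℒ`: lines (2-dimensional subspaces) contained in at least two of
the planes. -/
def arrLines {n : ℕ} (H : Fin n → Submodule ℂ (Fin 4 → ℂ)) :
    Set (Submodule ℂ (Fin 4 → ℂ)) :=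
  {l | finrank ℂ l = 2 ∧ 2 ≤ arrMult H l}

/-- The degree `d_𝒜` of the polar map of an arrangement of `n` planes in `ℙ³`,
given by the combinatorial formula of Corollary 4:
`d_𝒜 = n - 1 - ∑_{p ∈ 𝒫} (k_p - 1) + ∑_{l ∈ ℒ} (a_l - 1)(k_l - 1)`,
where `a_l = #{p ∈ 𝒫 : p ∈ l}`. -/
noncomputable def arrDegree {n : ℕ} (H : Fin n → Submodule ℂ (Fin 4 → ℂ)) : ℤ :=
  (n : ℤ) - 1 - (∑ᶠ p ∈ arrPoints H, ((arrMult H p : ℤ) - 1)) +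
    ∑ᶠ l ∈ arrLines H,
      ((Set.ncard {p ∈ arrPoints H | p ≤ l} : ℤ) - 1) * ((arrMult H l : ℤ) - 1)


namespace Arr16

open Classical

abbrev V : Type := Fin 4 → ℂ
abbrev Sub : Type := Submodule ℂ V

lemma rankV : finrank ℂ V = 4 := by simp

lemma rk_le4 (W : Sub) : finrank ℂ W ≤ 4 := by
  simpa [rankV] using Submodule.finrank_le W

lemma sup_inf (s t : Sub) :
    finrank ℂ (s ⊔ t : Sub) + finrank ℂ (s ⊓ t : Sub) = finrank ℂ s + finrank ℂ t :=
  Submodule.finrank_sup_add_finrank_inf_eq s t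

lemma eq_of_le_rk {s t : Sub} (h : s ≤ t) (he : finrank ℂ t ≤ finrank ℂ s) : s = t :=
  Submodule.eq_of_le_of_finrank_le h he

lemma rk_le_of_le {s t : Sub} (h : s ≤ t) : finrank ℂ s ≤ finrank ℂ t :=
  Submodule.finrank_mono h

/-- two distinct planes meet in a line -/
lemma inf_planes {s t : Sub} (hs : finrank ℂ s = 3) (ht : finrank ℂ t = 3) (hne : s ≠ t) :
    finrank ℂ (s ⊓ t : Sub) = 2 := by
  have h4 : finrank ℂ (s ⊔ t : Sub) = 4 := by
    have h1 := rk_le4 (s ⊔ t)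
    have h2 : finrank ℂ s ≤ finrank ℂ (s ⊔ t : Sub) := rk_le_of_le le_sup_left
    rcases lt_or_eq_of_le h2 with h | h
    · omega
    · exact absurd (hne ((eq_of_le_rk le_sup_left h.ge).trans
        (eq_of_le_rk le_sup_right (by omega)).symm)) (fun hc => hc)
  have := sup_inf s t
  omega

/-- two distinct lines inside a plane meet in a point -/
lemma inf_lines {l₁ l₂ P : Sub} (h1 : finrank ℂ l₁ = 2) (h2 : finrank ℂ l₂ = 2)
    (hP : finrank ℂ P = 3) (hl1 : l₁ ≤ P) (hl2 : l₂ ≤ P) (hne : l₁ ≠ l₂) :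
    finrank ℂ (l₁ ⊓ l₂ : Sub) = 1 := by
  have h3 : finrank ℂ (l₁ ⊔ l₂ : Sub) = 3 := by
    have hle : finrank ℂ (l₁ ⊔ l₂ : Sub) ≤ 3 := hP ▸ rk_le_of_le (sup_le hl1 hl2)
    have h2' : finrank ℂ l₁ ≤ finrank ℂ (l₁ ⊔ l₂ : Sub) := rk_le_of_le le_sup_left
    rcases lt_or_eq_of_le h2' with h | h
    · omega
    · exact absurd (hne ((eq_of_le_rk le_sup_left h.ge).trans
        (eq_of_le_rk le_sup_right (by omega)).symm)) (fun hc => hc)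
  have := sup_inf l₁ l₂
  omega

/-- a line not inside a plane meets it in a point -/
lemma inf_line_plane {m P : Sub} (hm : finrank ℂ m = 2) (hP : finrank ℂ P = 3)
    (hnle : ¬ m ≤ P) : finrank ℂ (m ⊓ P : Sub) = 1 := by
  have h4 : finrank ℂ (m ⊔ P : Sub) = 4 := by
    have h1 := rk_le4 (m ⊔ P)
    have h2 : finrank ℂ P ≤ finrank ℂ (m ⊔ P : Sub) := rk_le_of_le le_sup_right
    rcases lt_or_eq_of_le h2 with h | h
    · omega
    · exact absurd (le_sup_left.trans (eq_of_le_rk le_sup_right h.ge).ge) hnle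
  have := sup_inf m P
  omega

/-- two distinct points span a line -/
lemma sup_points {p₁ p₂ : Sub} (h1 : finrank ℂ p₁ = 1) (h2 : finrank ℂ p₂ = 1)
    (hne : p₁ ≠ p₂) : finrank ℂ (p₁ ⊔ p₂ : Sub) = 2 := by
  have h0 : finrank ℂ (p₁ ⊓ p₂ : Sub) = 0 := by
    have hle : finrank ℂ (p₁ ⊓ p₂ : Sub) ≤ 1 := h1 ▸ rk_le_of_le inf_le_left
    rcases Nat.lt_or_ge (finrank ℂ (p₁ ⊓ p₂ : Sub)) 1 with h | h
    · omega
    · have e1 : p₁ ⊓ p₂ = p₁ := eq_of_le_rk inf_le_left (by omega)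
      have e2 : p₁ ⊓ p₂ = p₂ := eq_of_le_rk inf_le_right (by omega)
      exact absurd (e1.symm.trans e2) hne
  have := sup_inf p₁ p₂
  omega

lemma exists_point {W : Sub} (hW : W ≠ ⊥) : ∃ p : Sub, p ≤ W ∧ finrank ℂ p = 1 := by
  obtain ⟨x, hx, hx0⟩ := Submodule.exists_mem_ne_zero_of_ne_bot hW
  exact ⟨Submodule.span ℂ {x}, (Submodule.span_singleton_le_iff_mem x W).2 hx,
    finrank_span_singleton hx0⟩

lemma exists_point' {W : Sub} (hW : 1 ≤ finrank ℂ W) : ∃ p : Sub, p ≤ W ∧ finrank ℂ p = 1 := by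
  apply exists_point
  intro h
  rw [h] at hW
  simp at hW

/- ### arrMult lemmas -/

lemma arrMult_eq_sum {n : ℕ} (Hs : Fin n → Sub) (W : Sub) :
    arrMult Hs W = ∑ i, if W ≤ Hs i then 1 else 0 := by
  rw [arrMult, Set.ncard_eq_toFinset_card', Set.toFinset_setOf, Finset.card_filter]

lemma arrMult_eq_card {n : ℕ} (Hs : Fin n → Sub) (W : Sub) :
    arrMult Hs W = (Finset.univ.filter fun i => W ≤ Hs i).card := by
  rw [arrMult, Set.ncard_eq_toFinset_card', Set.toFinset_setOf]

lemma arrMult_succ {N : ℕ} (H : Fin (N+1) → Sub) (W : Sub) :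
    arrMult H W = arrMult (fun i : Fin N => H i.castSucc) W
      + (if W ≤ H (Fin.last N) then 1 else 0) := by
  rw [arrMult_eq_sum, arrMult_eq_sum, Fin.sum_univ_castSucc]

lemma arrMult_anti {n : ℕ} (Hs : Fin n → Sub) {W₁ W₂ : Sub} (h : W₁ ≤ W₂) :
    arrMult Hs W₂ ≤ arrMult Hs W₁ :=
  Set.ncard_le_ncard (fun i hi => le_trans h hi) (Set.toFinite _)

lemma arrMult_le {n : ℕ} (Hs : Fin n → Sub) (W : Sub) : arrMult Hs W ≤ n := by
  have := Set.ncard_le_ncard (Set.subset_univ {i : Fin n | W ≤ Hs i}) (Set.toFinite _)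
  simpa [arrMult, Set.ncard_univ] using this

lemma one_le_arrMult_iff {n : ℕ} (Hs : Fin n → Sub) (W : Sub) :
    1 ≤ arrMult Hs W ↔ ∃ i, W ≤ Hs i := by
  rw [arrMult, Nat.one_le_iff_ne_zero, ← Nat.pos_iff_ne_zero,
    Set.ncard_pos (Set.toFinite _)]
  exact ⟨fun ⟨i, hi⟩ => ⟨i, hi⟩, fun ⟨i, hi⟩ => ⟨i, hi⟩⟩

lemma exists_pair_of_two_le {n : ℕ} {Hs : Fin n → Sub} {W : Sub}
    (h : 2 ≤ arrMult Hs W) : ∃ i j, i ≠ j ∧ W ≤ Hs i ∧ W ≤ Hs j := by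
  rw [arrMult] at h
  obtain ⟨i, j, hi, hj, hij⟩ := (Set.one_lt_ncard_iff (Set.toFinite _)).1 h
  exact ⟨i, j, hij, hi, hj⟩

lemma two_le_arrMult_of {n : ℕ} {Hs : Fin n → Sub} {W : Sub} {i j : Fin n}
    (hij : i ≠ j) (hi : W ≤ Hs i) (hj : W ≤ Hs j) : 2 ≤ arrMult Hs W := by
  have : ({i, j} : Set (Fin n)).ncard ≤ arrMult Hs W :=
    Set.ncard_le_ncard (by rintro x (rfl | rfl) <;> assumption) (Set.toFinite _)
  rwa [Set.ncard_pair hij] at this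

lemma three_le_arrMult_of {n : ℕ} {Hs : Fin n → Sub} {W : Sub} {i j k : Fin n}
    (hij : i ≠ j) (hik : i ≠ k) (hjk : j ≠ k)
    (hi : W ≤ Hs i) (hj : W ≤ Hs j) (hk : W ≤ Hs k) : 3 ≤ arrMult Hs W := by
  have : ({i, j, k} : Set (Fin n)).ncard ≤ arrMult Hs W :=
    Set.ncard_le_ncard (by rintro x (rfl | rfl | rfl) <;> assumption) (Set.toFinite _)
  have h3 : ({i, j, k} : Set (Fin n)).ncard = 3 := by
    rw [Set.ncard_insert_of_notMem (by simp [hij, hik]) (Set.toFinite _),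
      Set.ncard_pair hjk]
  omega



lemma arrDegree_small {n : ℕ} (Hs : Fin n → Sub) (hn : n ≤ 1) :
    arrDegree Hs = (n : ℤ) - 1 := by
  have hP : arrPoints Hs = ∅ := by
    ext p
    simp only [Set.mem_empty_iff_false, iff_false]
    rintro ⟨-, h3, -⟩
    have := arrMult_le Hs p
    omega
  have hL : arrLines Hs = ∅ := by
    ext l
    simp only [Set.mem_empty_iff_false, iff_false]
    rintro ⟨-, h2⟩
    have := arrMult_le Hs l
    omega
  rw [arrDegree, hP, hL, finsum_mem_empty, finsum_mem_empty]
  ring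

/- chunk2 -/

section Struct
variable {n : ℕ} {Hs : Fin n → Sub} (hH : ∀ i, finrank ℂ (Hs i) = 3)
  (hinj : Function.Injective Hs)

include hH hinj

lemma line_eq_inf {l : Sub} {i j : Fin n} (hij : i ≠ j) (hl : finrank ℂ l = 2)
    (h1 : l ≤ Hs i) (h2 : l ≤ Hs j) : l = Hs i ⊓ Hs j :=
  eq_of_le_rk (le_inf h1 h2)
    (by rw [inf_planes (hH i) (hH j) (fun h => hij (hinj h)), hl])

lemma finite_arrLines : (arrLines Hs).Finite := by
  apply Set.Finite.subset (Set.finite_range fun p : Fin n × Fin n => Hs p.1 ⊓ Hs p.2)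
  rintro l ⟨hl2, hm⟩
  obtain ⟨i, j, hij, h1, h2⟩ := exists_pair_of_two_le hm
  exact ⟨(i, j), (line_eq_inf hH hinj hij hl2 h1 h2).symm⟩

lemma point_eq_of_mem {p : Sub} (hp : p ∈ arrPoints Hs) :
    ∃ t : Fin n × Fin n × Fin n, p = Hs t.1 ⊓ Hs t.2.1 ⊓ Hs t.2.2 := by
  obtain ⟨hp1, hp3, hpl⟩ := hp
  obtain ⟨i, j, hij, h1, h2⟩ := exists_pair_of_two_le
    (show 2 ≤ arrMult Hs p by omega)
  push_neg at hpl
  set l : Sub := Hs i ⊓ Hs j with hl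
  have hl2 : finrank ℂ l = 2 := inf_planes (hH i) (hH j) (fun h => hij (hinj h))
  obtain ⟨k, hk1, hk2⟩ := hpl l hl2
  refine ⟨(i, j, k), eq_of_le_rk (le_inf (le_inf h1 h2) hk1) ?_⟩
  rw [inf_line_plane hl2 (hH k) hk2, hp1]

lemma finite_arrPoints : (arrPoints Hs).Finite := by
  apply Set.Finite.subset
    (Set.finite_range fun t : Fin n × Fin n × Fin n => Hs t.1 ⊓ Hs t.2.1 ⊓ Hs t.2.2)
  intro p hp
  obtain ⟨t, ht⟩ := point_eq_of_mem hH hinj hp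
  exact ⟨t, ht.symm⟩

lemma finite_pts_on (l : Sub) : {p ∈ arrPoints Hs | p ≤ l}.Finite :=
  (finite_arrPoints hH hinj).subset (fun p hp => hp.1)

lemma mem_line_of_mem_arrLines {l : Sub} (hl : l ∈ arrLines Hs) :
    ∃ i j, i ≠ j ∧ l = Hs i ⊓ Hs j := by
  obtain ⟨i, j, hij, h1, h2⟩ := exists_pair_of_two_le hl.2
  exact ⟨i, j, hij, line_eq_inf hH hinj hij hl.1 h1 h2⟩

/-- if some 1-dim subspace lies on all planes, the degree is 0 -/
lemma degree_zero_of_concurrent (hn : 1 ≤ n) (p₀ : Sub) (hp₀ : finrank ℂ p₀ = 1)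
    (hle : ∀ i, p₀ ≤ Hs i) : arrDegree Hs = 0 := by
  have hmultp₀ : arrMult Hs p₀ = n := by
    have : {i : Fin n | p₀ ≤ Hs i} = Set.univ := Set.eq_univ_of_forall hle
    rw [arrMult, this, Set.ncard_univ]; simp
  by_cases hcl : ∃ m : Sub, finrank ℂ m = 2 ∧ ∀ i, m ≤ Hs i
  · -- common line m
    obtain ⟨m, hm2, hmle⟩ := hcl
    have hP : arrPoints Hs = ∅ := by
      ext p
      simp only [Set.mem_empty_iff_false, iff_false]
      rintro ⟨h1, h2, h3⟩
      exact h3 ⟨m, hm2, fun i _ => hmle i⟩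
    have hmultm : arrMult Hs m = n := by
      have : {i : Fin n | m ≤ Hs i} = Set.univ := Set.eq_univ_of_forall hmle
      rw [arrMult, this, Set.ncard_univ]; simp
    have hLsub : arrLines Hs ⊆ {m} := by
      rintro l ⟨hl2, hlm⟩
      obtain ⟨i, j, hij, h1, h2⟩ := exists_pair_of_two_le hlm
      have e1 := line_eq_inf hH hinj hij hl2 h1 h2
      have e2 := line_eq_inf hH hinj hij hm2 (hmle i) (hmle j)
      simp [Set.mem_singleton_iff, e1, e2]
    rw [arrDegree, hP, finsum_mem_empty]
    rcases Nat.lt_or_ge n 2 with h2 | h2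
    · have hL : arrLines Hs = ∅ := by
        ext l
        simp only [Set.mem_empty_iff_false, iff_false]
        intro hl
        have := arrMult_le Hs l
        have := hl.2
        omega
      rw [hL, finsum_mem_empty]
      have hn1 : n = 1 := by omega
      subst hn1
      norm_num
    · have hL : arrLines Hs = {m} := by
        apply Set.Subset.antisymm hLsub
        rintro l rfl
        exact ⟨hm2, by omega⟩
      have he : {p : Sub | p ∈ (∅ : Set Sub) ∧ p ≤ m} = ∅ := by simp
      rw [hL, finsum_mem_singleton, he, hmultm, Set.ncard_empty]
      push_cast
      ring
  · -- no common line; then n ≥ 3 and arrPoints = {p₀}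
    have hn3 : 3 ≤ n := by
      by_contra h
      apply hcl
      interval_cases n
      · obtain ⟨l, hl, hl2⟩ : ∃ l : Sub, l ≤ Hs 0 ∧ finrank ℂ l = 2 := by
          obtain ⟨x, hx, hx0⟩ := Submodule.exists_mem_ne_zero_of_ne_bot
            (show Hs 0 ≠ ⊥ by intro h; have := hH 0; rw [h] at this; simp at this)
          have hxle : Submodule.span ℂ {x} ≤ Hs 0 :=
            (Submodule.span_singleton_le_iff_mem x _).2 hx
          have hnle : ¬ Hs 0 ≤ Submodule.span ℂ {x} := by
            intro hc
            have := rk_le_of_le hc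
            rw [hH 0, finrank_span_singleton hx0] at this
            omega
          obtain ⟨y, hy, hyn⟩ := SetLike.not_le_iff_exists.1 hnle
          refine ⟨Submodule.span ℂ {x} ⊔ Submodule.span ℂ {y},
            sup_le hxle ((Submodule.span_singleton_le_iff_mem y _).2 hy), ?_⟩
          have hy0 : y ≠ 0 := by rintro rfl; exact hyn (Submodule.zero_mem _)
          apply sup_points (finrank_span_singleton hx0) (finrank_span_singleton hy0)
          intro hc
          exact hyn (hc ▸ Submodule.mem_span_singleton_self y)
        exact ⟨l, hl2, fun i => by fin_cases i; exact hl⟩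
      · refine ⟨Hs 0 ⊓ Hs 1, inf_planes (hH 0) (hH 1)
          (fun h => absurd (hinj h) (by decide)), fun i => ?_⟩
        fin_cases i
        · exact inf_le_left
        · exact inf_le_right
    have hPmem : p₀ ∈ arrPoints Hs := by
      refine ⟨hp₀, by omega, fun ⟨l, hl2, hli⟩ => hcl ⟨l, hl2, fun i => hli i (hle i)⟩⟩
    have hP : arrPoints Hs = {p₀} := by
      apply Set.Subset.antisymm _ (by simpa using hPmem)
      rintro p ⟨h1, h2, h3⟩
      by_contra hne
      exact h3 ⟨p₀ ⊔ p, sup_points hp₀ h1 (fun h => hne h.symm),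
        fun i hi => sup_le (hle i) hi⟩
    have hLpt : ∀ l ∈ arrLines Hs, ({p ∈ arrPoints Hs | p ≤ l} : Set Sub) = {p₀} := by
      intro l hl
      obtain ⟨i, j, hij, hlij⟩ := mem_line_of_mem_arrLines hH hinj hl
      have : p₀ ≤ l := hlij ▸ le_inf (hle i) (hle j)
      rw [hP]
      ext p
      simp only [Set.mem_setOf_eq, Set.mem_singleton_iff]
      exact ⟨fun h => h.1, fun h => ⟨h, h ▸ this⟩⟩
    have hSL : (∑ᶠ l ∈ arrLines Hs,
        ((Set.ncard {p ∈ arrPoints Hs | p ≤ l} : ℤ) - 1) * ((arrMult Hs l : ℤ) - 1)) = 0 := by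
      rw [← finsum_mem_zero (arrLines Hs)]
      apply finsum_mem_congr rfl
      intro l hl
      rw [hLpt l hl]
      simp
    have hSP : (∑ᶠ p ∈ arrPoints Hs, ((arrMult Hs p : ℤ) - 1)) = (n : ℤ) - 1 := by
      rw [hP, finsum_mem_singleton, hmultp₀]
    rw [arrDegree, hSP, hSL]
    ring

end Struct

/- chunk3 -/


/-- the old arrangement (tail) -/
abbrev tl {N : ℕ} (H : Fin (N+1) → Sub) : Fin N → Sub := fun i => H i.castSucc
/-- the new plane -/
abbrev Pl {N : ℕ} (H : Fin (N+1) → Sub) : Sub := H (Fin.last N)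
/-- the induced lines in the new plane -/
def Lset {N : ℕ} (H : Fin (N+1) → Sub) : Set Sub :=
  {l | finrank ℂ l = 2 ∧ l ≤ Pl H ∧ 1 ≤ arrMult (tl H) l}
/-- number of induced lines through a point -/
noncomputable def tq {N : ℕ} (H : Fin (N+1) → Sub) (q : Sub) : ℕ :=
  ({l ∈ Lset H | q ≤ l}).ncard

section Main
variable {N : ℕ} {H : Fin (N+1) → Sub}

lemma tl_rank (hH : ∀ i, finrank ℂ (H i) = 3) (i : Fin N) :
    finrank ℂ (tl H i) = 3 := hH i.castSucc
lemma tl_inj (hinj : Function.Injective H) : Function.Injective (tl H) := fun i j h =>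
  Fin.castSucc_injective N (hinj h)
lemma Pl_rank (hH : ∀ i, finrank ℂ (H i) = 3) : finrank ℂ (Pl H) = 3 := hH (Fin.last N)
lemma Pl_ne_tl (hinj : Function.Injective H) (i : Fin N) : Pl H ≠ tl H i := fun h =>
  absurd (hinj h) (Fin.castSucc_lt_last i).ne'

variable (hH : ∀ i, finrank ℂ (H i) = 3) (hinj : Function.Injective H)
include hH hinj

lemma infPl_rank (i : Fin N) : finrank ℂ (Pl H ⊓ tl H i : Sub) = 2 :=
  inf_planes (Pl_rank hH) (tl_rank hH i) (Pl_ne_tl hinj i)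

lemma infPl_mem (i : Fin N) : Pl H ⊓ tl H i ∈ Lset H :=
  ⟨infPl_rank hH hinj i, inf_le_left,
    (one_le_arrMult_iff _ _).2 ⟨i, inf_le_right⟩⟩

lemma l_eq_inf {l : Sub} (hl : l ∈ Lset H) {i : Fin N} (hi : l ≤ tl H i) :
    l = Pl H ⊓ tl H i :=
  eq_of_le_rk (le_inf hl.2.1 hi) (by rw [infPl_rank hH hinj i, hl.1])

lemma Lset_eq_range : Lset H = Set.range (fun i => Pl H ⊓ tl H i) := by
  apply Set.Subset.antisymm
  · rintro l hl
    obtain ⟨i, hi⟩ := (one_le_arrMult_iff _ _).1 hl.2.2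
    exact ⟨i, (l_eq_inf hH hinj hl hi).symm⟩
  · rintro l ⟨i, rfl⟩
    exact infPl_mem hH hinj i

lemma finite_Lset : (Lset H).Finite := by
  rw [Lset_eq_range hH hinj]; exact Set.finite_range _

lemma finite_Lq (q : Sub) : {l ∈ Lset H | q ≤ l}.Finite :=
  (finite_Lset hH hinj).subset fun l hl => hl.1

omit hH hinj in
lemma mult_succ_of_le {W : Sub} (hW : W ≤ Pl H) :
    arrMult H W = arrMult (tl H) W + 1 := by
  rw [arrMult_succ H W, if_pos hW]

omit hH hinj in
lemma mult_succ_of_not_le {W : Sub} (hW : ¬ W ≤ Pl H) :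
    arrMult H W = arrMult (tl H) W := by
  rw [arrMult_succ H W, if_neg hW, add_zero]

/-- C1 : a point of the new plane is in `𝒫` iff at least 2 induced lines pass through it -/
lemma mem_P_iff_two_le_tq {q : Sub} (hq1 : finrank ℂ q = 1) (hqP : q ≤ Pl H) :
    q ∈ arrPoints H ↔ 2 ≤ tq H q := by
  constructor
  · rintro ⟨-, h3, hnl⟩
    rw [mult_succ_of_le hqP] at h3
    by_contra htq
    push_neg at htq
    have htq' : {l ∈ Lset H | q ≤ l}.ncard ≤ 1 := by
      simp only [tq] at htq; omega
    obtain ⟨i₁, i₂, hne, hle₁, hle₂⟩ := exists_pair_of_two_le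
      (show 2 ≤ arrMult (tl H) q by omega)
    set l₀ : Sub := Pl H ⊓ tl H i₁ with hl₀
    have hl₀mem : l₀ ∈ {l ∈ Lset H | q ≤ l} := ⟨infPl_mem hH hinj i₁, le_inf hqP hle₁⟩
    have huniq : ∀ l ∈ {l ∈ Lset H | q ≤ l}, l = l₀ := fun l hl =>
      (Set.ncard_le_one (finite_Lq hH hinj q)).1 htq' l hl l₀ hl₀mem
    apply hnl
    refine ⟨l₀, infPl_rank hH hinj i₁, fun i => ?_⟩
    induction i using Fin.lastCases with
    | last => exact fun _ => inf_le_left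
    | cast j =>
      intro hj
      have : Pl H ⊓ tl H j ∈ {l ∈ Lset H | q ≤ l} :=
        ⟨infPl_mem hH hinj j, le_inf hqP hj⟩
      have := huniq _ this
      calc l₀ = Pl H ⊓ tl H j := this.symm
        _ ≤ tl H j := inf_le_right
  · intro htq
    obtain ⟨l₁, l₂, hl₁, hl₂, hne⟩ := (Set.one_lt_ncard_iff (finite_Lq hH hinj q)).1 htq
    obtain ⟨i₁, hi₁⟩ := (one_le_arrMult_iff _ _).1 hl₁.1.2.2
    obtain ⟨i₂, hi₂⟩ := (one_le_arrMult_iff _ _).1 hl₂.1.2.2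
    have hii : i₁ ≠ i₂ := by
      rintro rfl
      exact hne ((l_eq_inf hH hinj hl₁.1 hi₁).trans (l_eq_inf hH hinj hl₂.1 hi₂).symm)
    refine ⟨hq1, ?_, ?_⟩
    · exact three_le_arrMult_of (i := i₁.castSucc) (j := i₂.castSucc) (k := Fin.last N)
        (fun h => hii (Fin.castSucc_injective N h)) (Fin.castSucc_lt_last i₁).ne
        (Fin.castSucc_lt_last i₂).ne (hl₁.2.trans hi₁) (hl₂.2.trans hi₂) hqP
    · rintro ⟨l, hl2, hli⟩
      have hlP : l ≤ Pl H := hli (Fin.last N) hqP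
      have h₁ : l ≤ tl H i₁ := hli i₁.castSucc (hl₁.2.trans hi₁)
      have h₂ : l ≤ tl H i₂ := hli i₂.castSucc (hl₂.2.trans hi₂)
      have e₁ : l = l₁ := by
        rw [l_eq_inf hH hinj hl₁.1 hi₁]
        exact eq_of_le_rk (le_inf hlP h₁) (by rw [infPl_rank hH hinj i₁, hl2])
      have e₂ : l = l₂ := by
        rw [l_eq_inf hH hinj hl₂.1 hi₂]
        exact eq_of_le_rk (le_inf hlP h₂) (by rw [infPl_rank hH hinj i₂, hl2])
      exact hne (e₁.symm.trans e₂)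

/-- C2 : fiberwise count of old planes through a point of the new plane -/
lemma mult_eq_sum_lines (LF : Finset Sub) (hLF : ∀ l, l ∈ LF ↔ l ∈ Lset H)
    {q : Sub} (hqP : q ≤ Pl H) :
    arrMult (tl H) q = ∑ l ∈ LF.filter (fun l => q ≤ l), arrMult (tl H) l := by
  rw [arrMult_eq_card]
  rw [Finset.card_eq_sum_card_fiberwise
    (f := fun i => Pl H ⊓ tl H i) (t := LF.filter (fun l => q ≤ l))
    (fun i hi => by
      simp only [Finset.mem_coe, Finset.mem_filter, Finset.mem_univ, true_and] at hi ⊢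
      exact ⟨(hLF _).2 (infPl_mem hH hinj i), le_inf hqP hi⟩)]
  apply Finset.sum_congr rfl
  intro l hl
  simp only [Finset.mem_filter] at hl
  obtain ⟨hlL, hql⟩ := hl
  rw [arrMult_eq_card]
  congr 1
  ext i
  simp only [Finset.mem_filter, Finset.mem_univ, true_and]
  constructor
  · rintro ⟨hqi, rfl⟩
    exact inf_le_right
  · intro hli
    exact ⟨hql.trans hli, (l_eq_inf hH hinj ((hLF _).1 hlL) hli).symm⟩

/-- D3 : total count -/
lemma card_eq_sum_lines (LF : Finset Sub) (hLF : ∀ l, l ∈ LF ↔ l ∈ Lset H) :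
    N = ∑ l ∈ LF, arrMult (tl H) l := by
  have h0 : (Finset.univ : Finset (Fin N)).card =
      ∑ l ∈ LF, (Finset.univ.filter fun i => Pl H ⊓ tl H i = l).card :=
    Finset.card_eq_sum_card_fiberwise (fun i _ => (hLF _).2 (infPl_mem hH hinj i))
  have h1 : ∀ l ∈ LF, (Finset.univ.filter fun i => Pl H ⊓ tl H i = l).card
      = arrMult (tl H) l := by
    intro l hl
    rw [arrMult_eq_card]
    congr 1
    ext i
    simp only [Finset.mem_filter, Finset.mem_univ, true_and]
    constructor
    · rintro rfl
      exact inf_le_right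
    · intro hli
      exact (l_eq_inf hH hinj ((hLF _).1 hl) hli).symm
  simpa using h0.trans (Finset.sum_congr rfl h1)

/-- a point of the plane on at least 2 lines has `tq ≤ old multiplicity` -/
lemma tq_le_mult {q : Sub} (LF : Finset Sub) (hLF : ∀ l, l ∈ LF ↔ l ∈ Lset H)
    (hqP : q ≤ Pl H) : tq H q ≤ arrMult (tl H) q := by
  rw [mult_eq_sum_lines hH hinj LF hLF hqP]
  have htq : tq H q = (LF.filter (fun l => q ≤ l)).card := by
    rw [tq, Set.ncard_eq_toFinset_card _ (finite_Lq hH hinj q)]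
    congr 1
    ext l
    simp [hLF l]
  rw [htq]
  calc (LF.filter (fun l => q ≤ l)).card
      = ∑ _l ∈ LF.filter (fun l => q ≤ l), 1 := by simp
    _ ≤ ∑ l ∈ LF.filter (fun l => q ≤ l), arrMult (tl H) l := by
        apply Finset.sum_le_sum
        intro l hl
        simp only [Finset.mem_filter] at hl
        exact ((hLF l).1 hl.1).2.2


/- chunk 4 : subset relations and double counting -/

lemma tq_eq_card (LF : Finset Sub) (hLF : ∀ l, l ∈ LF ↔ l ∈ Lset H) (q : Sub) :
    tq H q = (LF.filter (fun l => q ≤ l)).card := by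
  rw [tq, Set.ncard_eq_toFinset_card _ (finite_Lq hH hinj q)]
  congr 1
  ext l
  simp [hLF l]

omit hH hinj in
lemma P'_subset_P : arrPoints (tl H) ⊆ arrPoints H := by
  rintro p ⟨h1, h2, h3⟩
  refine ⟨h1, le_trans h2 ((arrMult_succ H p) ▸ Nat.le_add_right _ _), ?_⟩
  rintro ⟨l, hl2, hli⟩
  exact h3 ⟨l, hl2, fun i hi => hli i.castSucc hi⟩

omit hH hinj in
lemma mem_P'_of_not_le {p : Sub} (hp : p ∈ arrPoints H) (hnle : ¬ p ≤ Pl H) :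
    p ∈ arrPoints (tl H) := by
  obtain ⟨h1, h2, h3⟩ := hp
  rw [mult_succ_of_not_le hnle] at h2
  refine ⟨h1, h2, ?_⟩
  rintro ⟨l, hl2, hli⟩
  apply h3
  refine ⟨l, hl2, fun i => ?_⟩
  induction i using Fin.lastCases with
  | last => exact fun h => absurd h hnle
  | cast j => exact hli j

omit hH hinj in
lemma lines_not_le_eq :
    {l ∈ arrLines H | ¬ l ≤ Pl H} = {l ∈ arrLines (tl H) | ¬ l ≤ Pl H} := by
  ext l
  simp only [Set.mem_setOf_eq, arrLines]
  constructor
  · rintro ⟨⟨h2, hm⟩, hnle⟩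
    rw [mult_succ_of_not_le hnle] at hm
    exact ⟨⟨h2, hm⟩, hnle⟩
  · rintro ⟨⟨h2, hm⟩, hnle⟩
    rw [← mult_succ_of_not_le hnle] at hm
    exact ⟨⟨h2, hm⟩, hnle⟩

omit hH hinj in
lemma lines_le_eq : {l ∈ arrLines H | l ≤ Pl H} = Lset H := by
  ext l
  simp only [Set.mem_setOf_eq, arrLines, Lset]
  constructor
  · rintro ⟨⟨h2, hm⟩, hle⟩
    rw [mult_succ_of_le hle] at hm
    exact ⟨h2, hle, by omega⟩
  · rintro ⟨h2, hle, hm⟩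
    exact ⟨⟨h2, by rw [mult_succ_of_le hle]; omega⟩, hle⟩

omit hH hinj in
lemma lines'_le_eq : {l ∈ arrLines (tl H) | l ≤ Pl H}
    = {l ∈ Lset H | 2 ≤ arrMult (tl H) l} := by
  ext l
  simp only [Set.mem_setOf_eq, arrLines, Lset]
  exact ⟨fun ⟨⟨h2, hm⟩, hle⟩ => ⟨⟨h2, hle, by omega⟩, hm⟩,
    fun ⟨⟨h2, hle, _⟩, hm⟩ => ⟨⟨h2, hm⟩, hle⟩⟩

lemma a_eq_card (PA : Finset Sub) (hPA : ∀ p, p ∈ PA ↔ p ∈ arrPoints H ∧ p ≤ Pl H)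
    {l : Sub} (hl : l ≤ Pl H) :
    ({p ∈ arrPoints H | p ≤ l}).ncard = (PA.filter (fun p => p ≤ l)).card := by
  rw [Set.ncard_eq_toFinset_card _ (finite_pts_on hH hinj l)]
  congr 1
  ext p
  simp only [Set.Finite.mem_toFinset, Set.mem_setOf_eq, Finset.mem_filter, hPA p]
  exact ⟨fun ⟨h1, h2⟩ => ⟨⟨h1, h2.trans hl⟩, h2⟩, fun ⟨⟨h1, _⟩, h2⟩ => ⟨h1, h2⟩⟩

lemma a'_eq_card (PA' : Finset Sub)
    (hPA' : ∀ p, p ∈ PA' ↔ p ∈ arrPoints (tl H) ∧ p ≤ Pl H)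
    {l : Sub} (hl : l ≤ Pl H) :
    ({p ∈ arrPoints (tl H) | p ≤ l}).ncard = (PA'.filter (fun p => p ≤ l)).card := by
  rw [Set.ncard_eq_toFinset_card _ (finite_pts_on (tl_rank hH) (tl_inj hinj) l)]
  congr 1
  ext p
  simp only [Set.Finite.mem_toFinset, Set.mem_setOf_eq, Finset.mem_filter, hPA' p]
  exact ⟨fun ⟨h1, h2⟩ => ⟨⟨h1, h2.trans hl⟩, h2⟩, fun ⟨⟨h1, _⟩, h2⟩ => ⟨h1, h2⟩⟩

lemma a_mono (l : Sub) : ({p ∈ arrPoints (tl H) | p ≤ l}).ncard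
    ≤ ({p ∈ arrPoints H | p ≤ l}).ncard :=
  Set.ncard_le_ncard (fun p hp => ⟨P'_subset_P hp.1, hp.2⟩) (finite_pts_on hH hinj l)

lemma D1 (LF : Finset Sub) (hLF : ∀ l, l ∈ LF ↔ l ∈ Lset H)
    (PA : Finset Sub) (hPA : ∀ p, p ∈ PA ↔ p ∈ arrPoints H ∧ p ≤ Pl H) :
    ∑ l ∈ LF, (Set.ncard {p ∈ arrPoints H | p ≤ l} : ℤ) * (arrMult (tl H) l : ℤ)
      = ∑ p ∈ PA, (arrMult (tl H) p : ℤ) := by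
  have step1 : ∀ l ∈ LF,
      (Set.ncard {p ∈ arrPoints H | p ≤ l} : ℤ) * (arrMult (tl H) l : ℤ)
      = ∑ p ∈ PA, (if p ≤ l then (arrMult (tl H) l : ℤ) else 0) := by
    intro l hl
    rw [a_eq_card hH hinj PA hPA ((hLF l).1 hl).2.1, ← Finset.sum_filter,
      Finset.sum_const, nsmul_eq_mul]
  rw [Finset.sum_congr rfl step1, Finset.sum_comm]
  apply Finset.sum_congr rfl
  intro p hp
  rw [← Finset.sum_filter,
    show arrMult (tl H) p = ∑ l ∈ LF.filter (fun l => p ≤ l), arrMult (tl H) l from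
      mult_eq_sum_lines hH hinj LF hLF ((hPA p).1 hp).2]
  push_cast
  rfl

lemma D2 (LF : Finset Sub) (hLF : ∀ l, l ∈ LF ↔ l ∈ Lset H)
    (PA' : Finset Sub) (hPA' : ∀ p, p ∈ PA' ↔ p ∈ arrPoints (tl H) ∧ p ≤ Pl H) :
    ∑ l ∈ LF, (Set.ncard {p ∈ arrPoints (tl H) | p ≤ l} : ℤ)
        * ((arrMult (tl H) l : ℤ) - 1)
      = ∑ p ∈ PA', ((arrMult (tl H) p : ℤ) - (tq H p : ℤ)) := by
  have step1 : ∀ l ∈ LF,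
      (Set.ncard {p ∈ arrPoints (tl H) | p ≤ l} : ℤ) * ((arrMult (tl H) l : ℤ) - 1)
      = ∑ p ∈ PA', (if p ≤ l then ((arrMult (tl H) l : ℤ) - 1) else 0) := by
    intro l hl
    rw [a'_eq_card hH hinj PA' hPA' ((hLF l).1 hl).2.1, ← Finset.sum_filter,
      Finset.sum_const, nsmul_eq_mul]
  rw [Finset.sum_congr rfl step1, Finset.sum_comm]
  apply Finset.sum_congr rfl
  intro p hp
  rw [← Finset.sum_filter, Finset.sum_sub_distrib, Finset.sum_const, nsmul_eq_mul, mul_one,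
    ← tq_eq_card hH hinj LF hLF p,
    show arrMult (tl H) p = ∑ l ∈ LF.filter (fun l => p ≤ l), arrMult (tl H) l from
      mult_eq_sum_lines hH hinj LF hLF ((hPA' p).1 hp).2]
  push_cast
  rfl

/- chunk 5 : charging new points to old lines (I1) -/

lemma I1 (LL' : Finset Sub)
    (hLL' : ∀ l, l ∈ LL' ↔ l ∈ arrLines (tl H) ∧ ¬ l ≤ Pl H)
    (PA PA' : Finset Sub)
    (hPA : ∀ p, p ∈ PA ↔ p ∈ arrPoints H ∧ p ≤ Pl H)
    (hPA' : ∀ p, p ∈ PA' ↔ p ∈ arrPoints (tl H) ∧ p ≤ Pl H) :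
    ∑ q ∈ PA \ PA', ((tq H q : ℤ) - 1)
      ≤ ∑ l ∈ LL', ((Set.ncard {p ∈ arrPoints H | p ≤ l} : ℤ)
          - (Set.ncard {p ∈ arrPoints (tl H) | p ≤ l} : ℤ))
          * ((arrMult (tl H) l : ℤ) - 1) := by
  set F : Sub → ℤ := fun l => ((Set.ncard {p ∈ arrPoints H | p ≤ l} : ℤ)
      - (Set.ncard {p ∈ arrPoints (tl H) | p ≤ l} : ℤ))
      * ((arrMult (tl H) l : ℤ) - 1) with hF
  set LFin : Finset Sub := (finite_Lset hH hinj).toFinset with hLFin'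
  have hLFin : ∀ l, l ∈ LFin ↔ l ∈ Lset H := fun l => Set.Finite.mem_toFinset _
  have hex : ∀ q : Sub, ∃ m : Sub, q ∈ PA \ PA' →
      (m ∈ LL' ∧ m ⊓ Pl H = q ∧ ((tq H q : ℤ) - 1 ≤ F m)) := by
    intro q
    by_cases hq : q ∈ PA \ PA'
    swap
    · exact ⟨⊥, fun h => absurd h hq⟩
    rw [Finset.mem_sdiff] at hq
    obtain ⟨hq1, hq2⟩ := hq
    obtain ⟨hqP, hqPl⟩ := (hPA q).1 hq1
    have hdim : finrank ℂ q = 1 := hqP.1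
    have htq2 : 2 ≤ tq H q := (mem_P_iff_two_le_tq hH hinj hdim hqPl).1 hqP
    have htqle : tq H q ≤ arrMult (tl H) q := tq_le_mult hH hinj LFin hLFin hqPl
    have hq' : q ∉ arrPoints (tl H) := fun h => hq2 ((hPA' q).2 ⟨h, hqPl⟩)
    have hcommon : ∃ m : Sub, finrank ℂ m = 2 ∧ ∀ i, q ≤ tl H i → m ≤ tl H i := by
      rcases Nat.lt_or_ge (arrMult (tl H) q) 3 with h3 | h3
      · have h2 : arrMult (tl H) q = 2 := by omega
        obtain ⟨i₁, i₂, hne, hle₁, hle₂⟩ := exists_pair_of_two_le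
          (show 2 ≤ arrMult (tl H) q by omega)
        refine ⟨tl H i₁ ⊓ tl H i₂, inf_planes (tl_rank hH i₁) (tl_rank hH i₂)
          (fun h => hne (tl_inj hinj h)), ?_⟩
        have hset : {i : Fin N | q ≤ tl H i} = {i₁, i₂} := by
          symm
          refine Set.eq_of_subset_of_ncard_le ?_ ?_ (Set.toFinite _)
          · rintro i (rfl | rfl) <;> assumption
          · rw [Set.ncard_pair hne]
            exact le_of_eq (show {i : Fin N | q ≤ tl H i}.ncard = 2 from h2)
        intro i hi
        have hmem : i ∈ ({i₁, i₂} : Set (Fin N)) := hset ▸ hi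
        rcases hmem with rfl | rfl
        · exact inf_le_left
        · exact inf_le_right
      · by_contra hno
        exact hq' ⟨hdim, h3, fun ⟨m, hm2, hmi⟩ => hno ⟨m, hm2, hmi⟩⟩
    obtain ⟨m, hm2, hmi⟩ := hcommon
    obtain ⟨i₁, i₂, hne, hle₁, hle₂⟩ := exists_pair_of_two_le
      (show 2 ≤ arrMult (tl H) q by omega)
    have hmeq : m = tl H i₁ ⊓ tl H i₂ :=
      eq_of_le_rk (le_inf (hmi i₁ hle₁) (hmi i₂ hle₂))
        (by rw [inf_planes (tl_rank hH i₁) (tl_rank hH i₂)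
          (fun h => hne (tl_inj hinj h)), hm2])
    have hqm : q ≤ m := hmeq ▸ le_inf hle₁ hle₂
    have hmm : arrMult (tl H) q ≤ arrMult (tl H) m :=
      Set.ncard_le_ncard (fun i hi => hmi i hi) (Set.toFinite _)
    have hm2le : 2 ≤ arrMult (tl H) m := by omega
    have hmL' : m ∈ arrLines (tl H) := ⟨hm2, hm2le⟩
    have hmnle : ¬ m ≤ Pl H := by
      intro hle
      obtain ⟨l₁, l₂, hl₁, hl₂, hnel⟩ :=
        (Set.one_lt_ncard_iff (finite_Lq hH hinj q)).1 htq2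
      have key : ∀ l, l ∈ {l ∈ Lset H | q ≤ l} → l = m := by
        intro l hl
        obtain ⟨i, hi⟩ := (one_le_arrMult_iff _ _).1 hl.1.2.2
        have hqi : q ≤ tl H i := hl.2.trans hi
        have e1 : l = Pl H ⊓ tl H i := l_eq_inf hH hinj hl.1 hi
        have e2 : m = Pl H ⊓ tl H i :=
          eq_of_le_rk (le_inf hle (hmi i hqi))
            (by rw [infPl_rank hH hinj i, hm2])
        rw [e1, ← e2]
      exact hnel ((key _ hl₁).trans (key _ hl₂).symm)
    have hmLL' : m ∈ LL' := (hLL' m).2 ⟨hmL', hmnle⟩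
    have hqeq : m ⊓ Pl H = q :=
      (eq_of_le_rk (le_inf hqm hqPl)
        (by rw [inf_line_plane hm2 (Pl_rank hH) hmnle, hdim])).symm
    have haa : (Set.ncard {p ∈ arrPoints (tl H) | p ≤ m})
        < Set.ncard {p ∈ arrPoints H | p ≤ m} := by
      apply Set.ncard_lt_ncard _ (finite_pts_on hH hinj m)
      constructor
      · exact fun p hp => ⟨P'_subset_P hp.1, hp.2⟩
      · intro hsub
        exact hq' (hsub ⟨hqP, hqm⟩).1
    refine ⟨m, fun _ => ⟨hmLL', hqeq, ?_⟩⟩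
    rw [hF]
    have c1 : (tq H q : ℤ) - 1 ≤ (arrMult (tl H) m : ℤ) - 1 := by
      have : tq H q ≤ arrMult (tl H) m := le_trans htqle hmm
      omega
    calc (tq H q : ℤ) - 1 ≤ (arrMult (tl H) m : ℤ) - 1 := c1
      _ = 1 * ((arrMult (tl H) m : ℤ) - 1) := (one_mul _).symm
      _ ≤ ((Set.ncard {p ∈ arrPoints H | p ≤ m} : ℤ)
            - (Set.ncard {p ∈ arrPoints (tl H) | p ≤ m} : ℤ))
          * ((arrMult (tl H) m : ℤ) - 1) := by
          apply mul_le_mul_of_nonneg_right _ (by omega)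
          omega
  choose g hg using hex
  have hsum1 : ∑ q ∈ PA \ PA', ((tq H q : ℤ) - 1) ≤ ∑ q ∈ PA \ PA', F (g q) :=
    Finset.sum_le_sum (fun q hq => (hg q hq).2.2)
  have hinjg : ∀ x ∈ PA \ PA', ∀ y ∈ PA \ PA', g x = g y → x = y := by
    intro x hx y hy hxy
    rw [← (hg x hx).2.1, ← (hg y hy).2.1, hxy]
  have hsum2 : ∑ q ∈ PA \ PA', F (g q) = ∑ l ∈ (PA \ PA').image g, F l :=
    (Finset.sum_image hinjg).symm
  have hsum3 : ∑ l ∈ (PA \ PA').image g, F l ≤ ∑ l ∈ LL', F l := by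
    apply Finset.sum_le_sum_of_subset_of_nonneg
    · intro l hl
      obtain ⟨q, hq, rfl⟩ := Finset.mem_image.1 hl
      exact (hg q hq).1
    · intro l hl _
      rw [hF]
      apply mul_nonneg
      · have := a_mono hH hinj l
        omega
      · have := ((hLL' l).1 hl).1.2
        omega
  calc ∑ q ∈ PA \ PA', ((tq H q : ℤ) - 1) ≤ ∑ q ∈ PA \ PA', F (g q) := hsum1
    _ = ∑ l ∈ (PA \ PA').image g, F l := hsum2
    _ ≤ ∑ l ∈ LL', F l := hsum3

/- chunk 6 : the line-arrangement inequality (I2) -/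

lemma I2 (LF : Finset Sub) (hLF : ∀ l, l ∈ LF ↔ l ∈ Lset H)
    (PA : Finset Sub) (hPA : ∀ p, p ∈ PA ↔ p ∈ arrPoints H ∧ p ≤ Pl H)
    (hncp : ¬ ∃ p : Sub, finrank ℂ p = 1 ∧ ∀ i, p ≤ tl H i)
    (hN : 1 ≤ N) :
    (LF.card : ℤ) ≤ ∑ q ∈ PA, ((tq H q : ℤ) - 1) := by
  have hPAtq : ∀ p ∈ PA, 2 ≤ tq H p := by
    intro p hp
    obtain ⟨hP, hPl⟩ := (hPA p).1 hp
    exact (mem_P_iff_two_le_tq hH hinj hP.1 hPl).1 hP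
  have hmemLF : ∀ i : Fin N, Pl H ⊓ tl H i ∈ LF := fun i => (hLF _).2 (infPl_mem hH hinj i)
  have hint : ∀ l₁ l₂ : Sub, l₁ ∈ Lset H → l₂ ∈ Lset H → l₁ ≠ l₂ →
      l₁ ⊓ l₂ ∈ PA ∧ l₁ ⊓ l₂ ≤ l₁ ∧ l₁ ⊓ l₂ ≤ l₂ := by
    intro l₁ l₂ h₁ h₂ hne
    have hdim : finrank ℂ (l₁ ⊓ l₂ : Sub) = 1 :=
      inf_lines h₁.1 h₂.1 (Pl_rank hH) h₁.2.1 h₂.2.1 hne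
    have hPl : l₁ ⊓ l₂ ≤ Pl H := inf_le_left.trans h₁.2.1
    have hsub : ({l₁, l₂} : Set Sub) ⊆ {l ∈ Lset H | l₁ ⊓ l₂ ≤ l} := by
      rintro l (rfl | rfl)
      · exact ⟨h₁, inf_le_left⟩
      · exact ⟨h₂, inf_le_right⟩
    have htq : 2 ≤ tq H (l₁ ⊓ l₂) := by
      have hh := Set.ncard_le_ncard hsub (finite_Lq hH hinj _)
      rw [Set.ncard_pair hne] at hh
      simp only [tq]
      exact hh
    refine ⟨(hPA _).2 ⟨(mem_P_iff_two_le_tq hH hinj hdim hPl).2 htq, hPl⟩,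
      inf_le_left, inf_le_right⟩
  have hb : ∃ l₀ ∈ LF, ∃ p₀ ∈ PA, ¬ p₀ ≤ l₀ := by
    by_contra hc
    push_neg at hc
    set i0 : Fin N := ⟨0, hN⟩ with hi0
    by_cases hall : ∀ i, Pl H ⊓ tl H i = Pl H ⊓ tl H i0
    · obtain ⟨p, hple, hp1⟩ := exists_point'
        (show 1 ≤ finrank ℂ (Pl H ⊓ tl H i0 : Sub) by rw [infPl_rank hH hinj i0]; omega)
      refine hncp ⟨p, hp1, fun i => ?_⟩
      have : p ≤ Pl H ⊓ tl H i := (hall i).symm ▸ hple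
      exact this.trans inf_le_right
    · push_neg at hall
      obtain ⟨i, hi⟩ := hall
      obtain ⟨hmem, -, -⟩ := hint _ _ (infPl_mem hH hinj i) (infPl_mem hH hinj i0) hi
      have hdim : finrank ℂ ((Pl H ⊓ tl H i) ⊓ (Pl H ⊓ tl H i0) : Sub) = 1 :=
        ((hPA _).1 hmem).1.1
      exact hncp ⟨_, hdim, fun j => (hc _ (hmemLF j) _ hmem).trans inf_le_right⟩
  obtain ⟨l₀, hl₀, p₀, hp₀, hnp₀⟩ := hb
  have hl₀L : l₀ ∈ Lset H := (hLF _).1 hl₀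
  have hfib : (LF.erase l₀).card
      = ∑ p ∈ PA.filter (fun p => p ≤ l₀),
          ((LF.erase l₀).filter (fun l => l ⊓ l₀ = p)).card := by
    apply Finset.card_eq_sum_card_fiberwise
    intro l hl
    obtain ⟨hlne, hlLF⟩ := Finset.mem_erase.1 hl
    obtain ⟨hmem, -, hle2⟩ := hint _ _ ((hLF _).1 hlLF) hl₀L hlne
    exact Finset.mem_filter.2 ⟨hmem, hle2⟩
  have hfibbd : ∀ p ∈ PA.filter (fun p => p ≤ l₀),
      ((LF.erase l₀).filter (fun l => l ⊓ l₀ = p)).card ≤ tq H p - 1 := by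
    intro p hp
    obtain ⟨hpPA, hple⟩ := Finset.mem_filter.1 hp
    have hsub : (LF.erase l₀).filter (fun l => l ⊓ l₀ = p)
        ⊆ (LF.filter (fun l => p ≤ l)).erase l₀ := by
      intro l hl
      simp only [Finset.mem_filter, Finset.mem_erase] at hl ⊢
      exact ⟨hl.1.1, hl.1.2, hl.2 ▸ inf_le_left⟩
    have hcard := Finset.card_le_card hsub
    have hl₀mem : l₀ ∈ LF.filter (fun l => p ≤ l) := Finset.mem_filter.2 ⟨hl₀, hple⟩
    rw [Finset.card_erase_of_mem hl₀mem] at hcard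
    rw [tq_eq_card hH hinj LF hLF p]
    exact hcard
  have hLFpos : 1 ≤ LF.card := Finset.card_pos.2 ⟨l₀, hl₀⟩
  have h1 : (LF.card : ℤ) - 1 ≤ ∑ p ∈ PA.filter (fun p => p ≤ l₀), ((tq H p : ℤ) - 1) := by
    have hcast : ((LF.erase l₀).card : ℤ)
        = ∑ p ∈ PA.filter (fun p => p ≤ l₀),
            (((LF.erase l₀).filter (fun l => l ⊓ l₀ = p)).card : ℤ) := by
      exact_mod_cast hfib
    have hterm : ∀ p ∈ PA.filter (fun p => p ≤ l₀),
        (((LF.erase l₀).filter (fun l => l ⊓ l₀ = p)).card : ℤ) ≤ (tq H p : ℤ) - 1 := by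
      intro p hp
      have hbd := hfibbd p hp
      have h2 := hPAtq p (Finset.mem_filter.1 hp).1
      omega
    calc (LF.card : ℤ) - 1 = ((LF.erase l₀).card : ℤ) := by
          rw [Finset.card_erase_of_mem hl₀, Nat.cast_sub hLFpos, Nat.cast_one]
      _ = _ := hcast
      _ ≤ _ := Finset.sum_le_sum hterm
  have hsplit : ∑ p ∈ PA.filter (fun p => p ≤ l₀), ((tq H p : ℤ) - 1)
      + ∑ p ∈ PA.filter (fun p => ¬ p ≤ l₀), ((tq H p : ℤ) - 1)
      = ∑ p ∈ PA, ((tq H p : ℤ) - 1) :=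
    Finset.sum_filter_add_sum_filter_not PA _ _
  have h2 : (1 : ℤ) ≤ ∑ p ∈ PA.filter (fun p => ¬ p ≤ l₀), ((tq H p : ℤ) - 1) := by
    have hp₀mem : p₀ ∈ PA.filter (fun p => ¬ p ≤ l₀) := Finset.mem_filter.2 ⟨hp₀, hnp₀⟩
    have hsingle : (tq H p₀ : ℤ) - 1
        ≤ ∑ p ∈ PA.filter (fun p => ¬ p ≤ l₀), ((tq H p : ℤ) - 1) :=
      Finset.single_le_sum (f := fun p => (tq H p : ℤ) - 1)
        (fun p hp => by
          have := hPAtq p (Finset.mem_filter.1 hp).1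
          show (0 : ℤ) ≤ (tq H p : ℤ) - 1
          omega) hp₀mem
    have h3 := hPAtq p₀ hp₀
    have h4 : (2 : ℤ) ≤ (tq H p₀ : ℤ) := by exact_mod_cast h3
    linarith only [hsingle, h4]
  rw [← hsplit]
  linarith only [h1, h2]

/- chunk 7 : main inequality -/

lemma main_ineq (hncp : ¬ ∃ p : Sub, finrank ℂ p = 1 ∧ ∀ i, p ≤ tl H i) (hN : 1 ≤ N) :
    arrDegree (tl H) < arrDegree H := by
  have hH' : ∀ i, finrank ℂ (tl H i) = 3 := tl_rank hH
  have hinj' : Function.Injective (tl H) := tl_inj hinj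
  have fP : (arrPoints H).Finite := finite_arrPoints hH hinj
  have fP' : (arrPoints (tl H)).Finite := finite_arrPoints hH' hinj'
  have fLL : (arrLines H).Finite := finite_arrLines hH hinj
  have fLL' : (arrLines (tl H)).Finite := finite_arrLines hH' hinj'
  have fLs : (Lset H).Finite := finite_Lset hH hinj
  have hmemLs : ∀ l, l ∈ fLs.toFinset ↔ l ∈ Lset H := fun l => Set.Finite.mem_toFinset _
  have hPAchar : ∀ p, p ∈ fP.toFinset.filter (fun p => p ≤ Pl H)
      ↔ p ∈ arrPoints H ∧ p ≤ Pl H := by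
    intro p
    rw [Finset.mem_filter, Set.Finite.mem_toFinset]
  have hPA'char : ∀ p, p ∈ fP'.toFinset.filter (fun p => p ≤ Pl H)
      ↔ p ∈ arrPoints (tl H) ∧ p ≤ Pl H := by
    intro p
    rw [Finset.mem_filter, Set.Finite.mem_toFinset]
  have hLL'char : ∀ l, l ∈ fLL'.toFinset.filter (fun l => ¬ l ≤ Pl H)
      ↔ l ∈ arrLines (tl H) ∧ ¬ l ≤ Pl H := by
    intro l
    rw [Finset.mem_filter, Set.Finite.mem_toFinset]
  -- degrees as finite sums
  have hdegH : arrDegree H = ((N : ℤ) + 1) - 1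
      - ∑ p ∈ fP.toFinset, ((arrMult H p : ℤ) - 1)
      + ∑ l ∈ fLL.toFinset,
          ((Set.ncard {p ∈ arrPoints H | p ≤ l} : ℤ) - 1) * ((arrMult H l : ℤ) - 1) := by
    rw [arrDegree, finsum_mem_eq_finite_toFinset_sum _ fP,
      finsum_mem_eq_finite_toFinset_sum _ fLL]
    push_cast
    ring
  have hdegH' : arrDegree (tl H) = (N : ℤ) - 1
      - ∑ p ∈ fP'.toFinset, ((arrMult (tl H) p : ℤ) - 1)
      + ∑ l ∈ fLL'.toFinset,
          ((Set.ncard {p ∈ arrPoints (tl H) | p ≤ l} : ℤ) - 1)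
            * ((arrMult (tl H) l : ℤ) - 1) := by
    rw [arrDegree, finsum_mem_eq_finite_toFinset_sum _ fP',
      finsum_mem_eq_finite_toFinset_sum _ fLL']
  -- filter equalities
  have e1 : fP.toFinset.filter (fun p => ¬ p ≤ Pl H)
      = fP'.toFinset.filter (fun p => ¬ p ≤ Pl H) := by
    ext p
    simp only [Finset.mem_filter, Set.Finite.mem_toFinset]
    exact ⟨fun ⟨h1, h2⟩ => ⟨mem_P'_of_not_le h1 h2, h2⟩,
      fun ⟨h1, h2⟩ => ⟨P'_subset_P h1, h2⟩⟩
  have e2 : fLL.toFinset.filter (fun l => l ≤ Pl H) = fLs.toFinset := by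
    ext l
    simp only [Finset.mem_filter, Set.Finite.mem_toFinset]
    have := Set.ext_iff.1 (lines_le_eq (H := H)) l
    simpa using this
  have e3 : fLL.toFinset.filter (fun l => ¬ l ≤ Pl H)
      = fLL'.toFinset.filter (fun l => ¬ l ≤ Pl H) := by
    ext l
    simp only [Finset.mem_filter, Set.Finite.mem_toFinset]
    have := Set.ext_iff.1 (lines_not_le_eq (H := H)) l
    simpa using this
  have e4 : fLL'.toFinset.filter (fun l => l ≤ Pl H)
      = fLs.toFinset.filter (fun l => 2 ≤ arrMult (tl H) l) := by
    ext l
    simp only [Finset.mem_filter, Set.Finite.mem_toFinset]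
    have := Set.ext_iff.1 (lines'_le_eq (H := H)) l
    simpa using this
  -- point sums
  have hSPsplit : ∑ p ∈ fP.toFinset, ((arrMult H p : ℤ) - 1)
      = ∑ p ∈ fP.toFinset.filter (fun p => p ≤ Pl H), (arrMult (tl H) p : ℤ)
        + ∑ p ∈ fP'.toFinset.filter (fun p => ¬ p ≤ Pl H), ((arrMult (tl H) p : ℤ) - 1) := by
    rw [← Finset.sum_filter_add_sum_filter_not fP.toFinset (fun p => p ≤ Pl H)
      (fun p => ((arrMult H p : ℤ) - 1))]
    congr 1
    · apply Finset.sum_congr rfl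
      intro p hp
      rw [mult_succ_of_le (Finset.mem_filter.1 hp).2]
      push_cast
      ring
    · rw [e1]
      apply Finset.sum_congr rfl
      intro p hp
      rw [mult_succ_of_not_le (Finset.mem_filter.1 hp).2]
  have hSP'split : ∑ p ∈ fP'.toFinset, ((arrMult (tl H) p : ℤ) - 1)
      = ∑ p ∈ fP'.toFinset.filter (fun p => p ≤ Pl H), ((arrMult (tl H) p : ℤ) - 1)
        + ∑ p ∈ fP'.toFinset.filter (fun p => ¬ p ≤ Pl H), ((arrMult (tl H) p : ℤ) - 1) :=
    (Finset.sum_filter_add_sum_filter_not _ _ _).symm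
  -- line sums
  have hSLsplit : ∑ l ∈ fLL.toFinset,
        ((Set.ncard {p ∈ arrPoints H | p ≤ l} : ℤ) - 1) * ((arrMult H l : ℤ) - 1)
      = ∑ l ∈ fLs.toFinset,
          ((Set.ncard {p ∈ arrPoints H | p ≤ l} : ℤ) - 1) * (arrMult (tl H) l : ℤ)
        + ∑ l ∈ fLL'.toFinset.filter (fun l => ¬ l ≤ Pl H),
          ((Set.ncard {p ∈ arrPoints H | p ≤ l} : ℤ) - 1) * ((arrMult (tl H) l : ℤ) - 1) := by
    rw [← Finset.sum_filter_add_sum_filter_not fLL.toFinset (fun l => l ≤ Pl H)]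
    congr 1
    · rw [e2]
      apply Finset.sum_congr rfl
      intro l hl
      rw [mult_succ_of_le ((hmemLs l).1 hl).2.1]
      push_cast
      ring
    · rw [e3]
      apply Finset.sum_congr rfl
      intro l hl
      rw [mult_succ_of_not_le (Finset.mem_filter.1 hl).2]
  have hSL'split : ∑ l ∈ fLL'.toFinset,
        ((Set.ncard {p ∈ arrPoints (tl H) | p ≤ l} : ℤ) - 1) * ((arrMult (tl H) l : ℤ) - 1)
      = ∑ l ∈ fLs.toFinset,
          ((Set.ncard {p ∈ arrPoints (tl H) | p ≤ l} : ℤ) - 1) * ((arrMult (tl H) l : ℤ) - 1)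
        + ∑ l ∈ fLL'.toFinset.filter (fun l => ¬ l ≤ Pl H),
          ((Set.ncard {p ∈ arrPoints (tl H) | p ≤ l} : ℤ) - 1)
            * ((arrMult (tl H) l : ℤ) - 1) := by
    rw [← Finset.sum_filter_add_sum_filter_not fLL'.toFinset (fun l => l ≤ Pl H)]
    congr 1
    rw [e4]
    apply Finset.sum_subset (Finset.filter_subset _ _)
    intro l hl hnl
    have h1 : 1 ≤ arrMult (tl H) l := ((hmemLs l).1 hl).2.2
    have h2 : ¬ 2 ≤ arrMult (tl H) l := fun h => hnl (Finset.mem_filter.2 ⟨hl, h⟩)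
    have hm1 : arrMult (tl H) l = 1 := by omega
    rw [hm1]
    push_cast
    ring
  -- double counting
  have hD3 : ((N : ℕ) : ℤ) = ∑ l ∈ fLs.toFinset, (arrMult (tl H) l : ℤ) := by
    exact_mod_cast congrArg (Nat.cast : ℕ → ℤ) (card_eq_sum_lines hH hinj fLs.toFinset hmemLs)
  have hD1 := D1 hH hinj fLs.toFinset hmemLs
    (fP.toFinset.filter (fun p => p ≤ Pl H)) hPAchar
  have hD2 := D2 hH hinj fLs.toFinset hmemLs
    (fP'.toFinset.filter (fun p => p ≤ Pl H)) hPA'char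
  have hexp1 : ∑ l ∈ fLs.toFinset,
        ((Set.ncard {p ∈ arrPoints H | p ≤ l} : ℤ) - 1) * (arrMult (tl H) l : ℤ)
      = ∑ p ∈ fP.toFinset.filter (fun p => p ≤ Pl H), (arrMult (tl H) p : ℤ)
        - (N : ℤ) := by
    have hr : ∀ l ∈ fLs.toFinset,
        ((Set.ncard {p ∈ arrPoints H | p ≤ l} : ℤ) - 1) * (arrMult (tl H) l : ℤ)
        = (Set.ncard {p ∈ arrPoints H | p ≤ l} : ℤ) * (arrMult (tl H) l : ℤ)
          - (arrMult (tl H) l : ℤ) := by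
      intro l _
      ring
    rw [Finset.sum_congr rfl hr, Finset.sum_sub_distrib, hD1, ← hD3]
  have hexp2 : ∑ l ∈ fLs.toFinset,
        ((Set.ncard {p ∈ arrPoints (tl H) | p ≤ l} : ℤ) - 1) * ((arrMult (tl H) l : ℤ) - 1)
      = ∑ p ∈ fP'.toFinset.filter (fun p => p ≤ Pl H),
          ((arrMult (tl H) p : ℤ) - (tq H p : ℤ))
        - ((N : ℤ) - (fLs.toFinset.card : ℤ)) := by
    have hr : ∀ l ∈ fLs.toFinset,
        ((Set.ncard {p ∈ arrPoints (tl H) | p ≤ l} : ℤ) - 1) * ((arrMult (tl H) l : ℤ) - 1)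
        = (Set.ncard {p ∈ arrPoints (tl H) | p ≤ l} : ℤ) * ((arrMult (tl H) l : ℤ) - 1)
          - ((arrMult (tl H) l : ℤ) - 1) := by
      intro l _
      ring
    have hfin : ∑ l ∈ fLs.toFinset, ((arrMult (tl H) l : ℤ) - 1)
        = (N : ℤ) - (fLs.toFinset.card : ℤ) := by
      rw [Finset.sum_sub_distrib, Finset.sum_const, ← hD3, nsmul_eq_mul, mul_one]
    rw [Finset.sum_congr rfl hr, Finset.sum_sub_distrib, hD2, hfin]
  -- inequalities
  have hsubPA : fP'.toFinset.filter (fun p => p ≤ Pl H)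
      ⊆ fP.toFinset.filter (fun p => p ≤ Pl H) := by
    intro p hp
    obtain ⟨h1, h2⟩ := (hPA'char p).1 hp
    exact (hPAchar p).2 ⟨P'_subset_P h1, h2⟩
  have hsdiff : ∑ p ∈ fP.toFinset.filter (fun p => p ≤ Pl H)
          \ fP'.toFinset.filter (fun p => p ≤ Pl H), ((tq H p : ℤ) - 1)
        + ∑ p ∈ fP'.toFinset.filter (fun p => p ≤ Pl H), ((tq H p : ℤ) - 1)
      = ∑ p ∈ fP.toFinset.filter (fun p => p ≤ Pl H), ((tq H p : ℤ) - 1) :=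
    Finset.sum_sdiff hsubPA
  have hI1 := I1 hH hinj (fLL'.toFinset.filter (fun l => ¬ l ≤ Pl H)) hLL'char
    (fP.toFinset.filter (fun p => p ≤ Pl H)) (fP'.toFinset.filter (fun p => p ≤ Pl H))
    hPAchar hPA'char
  have hI2 := I2 hH hinj fLs.toFinset hmemLs
    (fP.toFinset.filter (fun p => p ≤ Pl H)) hPAchar hncp hN
  have hEid : ∑ l ∈ fLL'.toFinset.filter (fun l => ¬ l ≤ Pl H),
        ((Set.ncard {p ∈ arrPoints H | p ≤ l} : ℤ)
          - (Set.ncard {p ∈ arrPoints (tl H) | p ≤ l} : ℤ)) * ((arrMult (tl H) l : ℤ) - 1)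
      = ∑ l ∈ fLL'.toFinset.filter (fun l => ¬ l ≤ Pl H),
          ((Set.ncard {p ∈ arrPoints H | p ≤ l} : ℤ) - 1) * ((arrMult (tl H) l : ℤ) - 1)
        - ∑ l ∈ fLL'.toFinset.filter (fun l => ¬ l ≤ Pl H),
          ((Set.ncard {p ∈ arrPoints (tl H) | p ≤ l} : ℤ) - 1)
            * ((arrMult (tl H) l : ℤ) - 1) := by
    rw [← Finset.sum_sub_distrib]
    apply Finset.sum_congr rfl
    intro l _
    ring
  have hPA'id : ∑ p ∈ fP'.toFinset.filter (fun p => p ≤ Pl H), ((tq H p : ℤ) - 1)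
      = ∑ p ∈ fP'.toFinset.filter (fun p => p ≤ Pl H), ((arrMult (tl H) p : ℤ) - 1)
        - ∑ p ∈ fP'.toFinset.filter (fun p => p ≤ Pl H),
            ((arrMult (tl H) p : ℤ) - (tq H p : ℤ)) := by
    rw [← Finset.sum_sub_distrib]
    apply Finset.sum_congr rfl
    intro p _
    ring
  rw [hdegH, hdegH']
  linarith only [hSPsplit, hSP'split, hSLsplit, hSL'split, hexp1, hexp2, hsdiff,
    hI1, hI2, hEid, hPA'id]

end Main
end Arr16

/-- Lemma 8: adding one more distinct plane to an arrangement
`𝒜` of `N` distinct planes in `ℙ³` with `d_𝒜 ≠ 0` strictly increases the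
degree of the polar map. -/
theorem arrDegree_lt_of_add_plane (N : ℕ)
    (H : Fin (N + 1) → Submodule ℂ (Fin 4 → ℂ))
    (hH : ∀ i, finrank ℂ (H i) = 3) (hinj : Function.Injective H)
    (hd : arrDegree (fun i : Fin N => H i.castSucc) ≠ 0) :
    arrDegree (fun i : Fin N => H i.castSucc) < arrDegree H := by
  rcases Nat.eq_zero_or_pos N with hN0 | hN
  · subst hN0
    rw [Arr16.arrDegree_small (fun i : Fin 0 => H i.castSucc) (by omega),
      Arr16.arrDegree_small H (by omega)]
    norm_num
  · by_cases hcp : ∃ p : Arr16.Sub, finrank ℂ p = 1 ∧ ∀ i, p ≤ Arr16.tl H i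
    · obtain ⟨p, hp1, hple⟩ := hcp
      exact absurd (Arr16.degree_zero_of_concurrent (Arr16.tl_rank hH)
        (Arr16.tl_inj hinj) hN p hp1 hple) hd
    · exact Arr16.main_ineq hH hinj hcp hN
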